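/- If X is a locally two-distance set in ℝ^d with |X| ≥ 4 and Y ⊆ X is a saturated subset with dim(span of Y translated to origin) = d, then X \ Y contains at most one point, and X is a two-distance set. -/

import Mathlib

open scoped Classical

/-- `A_X(x)`: the set of distances from `x` to the other points of `X`. -/
noncomputable def distancesFrom {d : ℕ} (X : Finset (EuclideanSpace ℝ (Fin d)))
    (x : EuclideanSpace ℝ (Fin d)) : Finset ℝ :=
  (X.erase x).image (fun y => dist x y)

/-- `A(X)`: the set of distances between distinct points of `X`. -/
noncomputable def distSet {d : ℕ} (X : Finset (EuclideanSpace ℝ (Fin d))) : Finset ℝ :=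
  X.offDiag.image (fun p => dist p.1 p.2)

/-- `Y` is a saturated subset of `X`: `|Y| ≥ 2` and `Y` is maximal among subsets of `X` with
the property that, for some distinct positive reals `α, β`, every `y ∈ Y` has
`A_X(y) = {α, β}`. -/
def IsSaturated {d : ℕ} (X Y : Finset (EuclideanSpace ℝ (Fin d))) : Prop :=
  Y ⊆ X ∧ 2 ≤ Y.card ∧
    (∃ α β : ℝ, 0 < α ∧ 0 < β ∧ α ≠ β ∧ ∀ y ∈ Y, distancesFrom X y = {α, β}) ∧
    ∀ Z, Y ⊆ Z → Z ⊆ X →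
      (∃ α β : ℝ, 0 < α ∧ 0 < β ∧ α ≠ β ∧ ∀ y ∈ Z, distancesFrom X y = {α, β}) → Z = Y

open scoped RealInnerProductSpace

lemma inner_eq_of_dist_eq' {E : Type*} [NormedAddCommGroup E] [InnerProductSpace ℝ E]
    (x y1 y2 : E) (h : dist x y1 = dist x y2) :
    2 * ⟪x, y1 - y2⟫ = ‖y1‖ ^ 2 - ‖y2‖ ^ 2 := by
  have h' : ‖x - y1‖ ^ 2 = ‖x - y2‖ ^ 2 := by
    rw [← dist_eq_norm, ← dist_eq_norm, h]
  rw [norm_sub_sq_real, norm_sub_sq_real] at h'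
  rw [inner_sub_right]
  linarith

/-- If `X ⊆ ℝ^d` is a locally two-distance set with at least 4 points and `Y ⊆ X` is a
saturated subset whose (translated-to-origin) span has dimension `d`, then `X \ Y` has at
most one point and `X` is a two-distance set. -/
theorem stmt7 (d : ℕ) (X Y : Finset (EuclideanSpace ℝ (Fin d)))
    (hloc : ∀ x ∈ X, (distancesFrom X x).card ≤ 2) (hcard : 4 ≤ X.card)
    (hsat : IsSaturated X Y)
    (hdim : Module.finrank ℝ (vectorSpan ℝ (Y : Set (EuclideanSpace ℝ (Fin d)))) = d) :
    (X \ Y).card ≤ 1 ∧ (distSet X).card = 2 := by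
  obtain ⟨hYX, hY2, ⟨α, β, hα, hβ, hαβ, hall⟩, hmax⟩ := hsat
  -- every point of X \ Y is equidistant from all points of Y
  have hequi : ∀ x ∈ X, x ∉ Y → ∀ y1 ∈ Y, ∀ y2 ∈ Y, dist x y1 = dist x y2 := by
    intro x hxX hxY y1 hy1 y2 hy2
    by_contra hne
    have hd : ∀ y ∈ Y, dist x y ∈ ({α, β} : Finset ℝ) ∧ dist x y ∈ distancesFrom X x := by
      intro y hy
      have hxy : x ≠ y := fun h => hxY (h ▸ hy)
      constructor
      · rw [← hall y hy]
        exact Finset.mem_image.mpr ⟨x, Finset.mem_erase.mpr ⟨hxy, hxX⟩, dist_comm y x⟩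
      · exact Finset.mem_image.mpr ⟨y, Finset.mem_erase.mpr ⟨hxy.symm, hYX hy⟩, rfl⟩
    obtain ⟨h1m, h1d⟩ := hd y1 hy1
    obtain ⟨h2m, h2d⟩ := hd y2 hy2
    have hboth : α ∈ distancesFrom X x ∧ β ∈ distancesFrom X x := by
      rcases Finset.mem_insert.mp h1m with e1 | e1 <;>
        rcases Finset.mem_insert.mp h2m with e2 | e2 <;>
        try simp only [Finset.mem_singleton] at *
      · exact absurd (e1.trans e2.symm) hne
      · exact ⟨e1 ▸ h1d, e2 ▸ h2d⟩
      · exact ⟨e2 ▸ h2d, e1 ▸ h1d⟩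
      · exact absurd (e1.trans e2.symm) hne
    have hsub : ({α, β} : Finset ℝ) ⊆ distancesFrom X x := by
      intro r hr
      rcases Finset.mem_insert.mp hr with rfl | hr
      · exact hboth.1
      · rw [Finset.mem_singleton] at hr; subst hr; exact hboth.2
    have heq : ({α, β} : Finset ℝ) = distancesFrom X x :=
      Finset.eq_of_subset_of_card_le hsub (by rw [Finset.card_pair hαβ]; exact hloc x hxX)
    have hins : insert x Y = Y := by
      refine hmax (insert x Y) (Finset.subset_insert x Y) (Finset.insert_subset hxX hYX)
        ⟨α, β, hα, hβ, hαβ, ?_⟩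
      intro y hy
      rcases Finset.mem_insert.mp hy with rfl | hy
      · exact heq.symm
      · exact hall y hy
    exact hxY (hins ▸ Finset.mem_insert_self x Y)
  have hspan : vectorSpan ℝ (Y : Set (EuclideanSpace ℝ (Fin d))) = ⊤ :=
    Submodule.eq_top_of_finrank_eq (by rw [hdim, finrank_euclideanSpace_fin])
  -- at most one point outside Y
  have huniq : ∀ x1 x2 : EuclideanSpace ℝ (Fin d),
      x1 ∈ X → x1 ∉ Y → x2 ∈ X → x2 ∉ Y → x1 = x2 := by
    intro x1 x2 hx1 hx1' hx2 hx2'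
    have hle : vectorSpan ℝ (Y : Set (EuclideanSpace ℝ (Fin d))) ≤ (ℝ ∙ (x1 - x2))ᗮ := by
      rw [vectorSpan]
      refine Submodule.span_le.mpr ?_
      rintro v hv
      rw [Set.mem_vsub] at hv
      obtain ⟨y1, hy1, y2, hy2, rfl⟩ := hv
      rw [SetLike.mem_coe, Submodule.mem_orthogonal_singleton_iff_inner_right]
      have e1 := inner_eq_of_dist_eq' x1 y1 y2 (hequi x1 hx1 hx1' y1 hy1 y2 hy2)
      have e2 := inner_eq_of_dist_eq' x2 y1 y2 (hequi x2 hx2 hx2' y1 hy1 y2 hy2)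
      rw [vsub_eq_sub, inner_sub_left]
      linarith
    have hmem : x1 - x2 ∈ (ℝ ∙ (x1 - x2))ᗮ := (hspan ▸ hle) Submodule.mem_top
    have h0 : ⟪x1 - x2, x1 - x2⟫ = 0 :=
      (Submodule.mem_orthogonal _ _).mp hmem (x1 - x2) (Submodule.mem_span_singleton_self _)
    exact sub_eq_zero.mp (inner_self_eq_zero.mp h0)
  have hcard1 : (X \ Y).card ≤ 1 := by
    refine Finset.card_le_one.mpr ?_
    intro a ha b hb
    rw [Finset.mem_sdiff] at ha hb
    exact huniq a b ha.1 ha.2 hb.1 hb.2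
  obtain ⟨y0, hy0⟩ : ∃ y, y ∈ Y := Finset.card_pos.mp (by omega)
  have hds : distSet X = {α, β} := by
    ext r
    simp only [distSet, Finset.mem_image, Finset.mem_offDiag]
    constructor
    · rintro ⟨⟨p1, p2⟩, ⟨hp1, hp2, hpne⟩, rfl⟩
      by_cases h1 : p1 ∈ Y
      · have : dist p1 p2 ∈ distancesFrom X p1 :=
          Finset.mem_image.mpr ⟨p2, Finset.mem_erase.mpr ⟨hpne.symm, hp2⟩, rfl⟩
        rwa [hall p1 h1] at this
      by_cases h2 : p2 ∈ Y
      · have : dist p2 p1 ∈ distancesFrom X p2 :=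
          Finset.mem_image.mpr ⟨p1, Finset.mem_erase.mpr ⟨hpne, hp1⟩, rfl⟩
        rw [hall p2 h2] at this
        rwa [dist_comm]
      · exact absurd (huniq p1 p2 hp1 h1 hp2 h2) hpne
    · intro hr
      have hrm : r ∈ distancesFrom X y0 := by rw [hall y0 hy0]; exact hr
      obtain ⟨z, hz, hdz⟩ := Finset.mem_image.mp hrm
      rw [Finset.mem_erase] at hz
      exact ⟨(y0, z), ⟨hYX hy0, hz.2, hz.1.symm⟩, hdz⟩
  exact ⟨hcard1, by rw [hds]; exact Finset.card_pair hαβ⟩
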